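/- Let T = (T_a, T_b) be a rooted binary tree with n = n_a + n_b leaves, n_a ≥ n_b, and let k = ⌈log₂ n⌉. If n_a > 2^{k-1}, then T does not minimize Δ_CS = C - S among rooted binary trees with n leaves. -/
import Mathlib


/-- Rooted binary trees: a leaf, or an internal vertex with two child subtrees. -/
inductive BTree where
  | leaf : BTree
  | node : BTree → BTree → BTree
deriving DecidableEq

namespace BTree

/-- Number of leaves of a rooted binary tree. -/
def numLeaves : BTree → ℕ
  | leaf => 1
  | node l r => numLeaves l + numLeaves r

/-- Sackin index: sum over internal vertices `v` of `n_{v_a} + n_{v_b}`. -/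
def sackin : BTree → ℕ
  | leaf => 0
  | node l r => sackin l + sackin r + (numLeaves l + numLeaves r)

/-- Colless index: sum over internal vertices `v` of `|n_{v_a} - n_{v_b}|`. -/
def colless : BTree → ℕ
  | leaf => 0
  | node l r =>
      colless l + colless r +
        (max (numLeaves l) (numLeaves r) - min (numLeaves l) (numLeaves r))

/-- `N_a`: sum over internal vertices of the larger child-subtree leaf count. -/
def Na : BTree → ℕ
  | leaf => 0
  | node l r => Na l + Na r + max (numLeaves l) (numLeaves r)

/-- `N_b`: sum over internal vertices of the smaller child-subtree leaf count. -/
def Nb : BTree → ℕ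
  | leaf => 0
  | node l r => Nb l + Nb r + min (numLeaves l) (numLeaves r)

/-- `Δ_CS = C - S`, as an integer. -/
def deltaCS (T : BTree) : ℤ := (colless T : ℤ) - (sackin T : ℤ)

/-- Caterpillar trees: every internal vertex has at least one leaf child. -/
def isCaterpillar : BTree → Prop
  | leaf => True
  | node l r => (l = leaf ∧ isCaterpillar r) ∨ (r = leaf ∧ isCaterpillar l)

/-- The fully balanced tree of height `h`. -/
def fbTree : ℕ → BTree
  | 0 => leaf
  | h + 1 => node (fbTree h) (fbTree h)

end BTree

namespace BTree

/-- Extremal function: maximal `Nb` among trees with `n` leaves. -/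
def g (n : ℕ) : ℕ :=
  if _ : n ≤ 1 then 0 else g ((n + 1) / 2) + g (n / 2) + n / 2
decreasing_by all_goals omega

lemma g_zero : g 0 = 0 := by rw [g, dif_pos (by norm_num)]
lemma g_one : g 1 = 0 := by rw [g, dif_pos (by norm_num)]

lemma g_eq (n : ℕ) (h : 1 ≤ n) : g n = g ((n + 1) / 2) + g (n / 2) + n / 2 := by
  rcases eq_or_lt_of_le h with h1 | h2
  · rw [← h1]
    norm_num [g_zero, g_one]
  · rw [g, dif_neg (by omega)]

lemma g_superadd_aux : ∀ n, ∀ a b : ℕ, a + b = n → b ≤ a → g a + g b + b ≤ g n := by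
  intro n
  induction n using Nat.strong_induction_on with
  | _ n IH =>
    intro a b hab hba
    rcases Nat.eq_zero_or_pos b with hb0 | hb1
    · subst hb0
      have : a = n := by omega
      subst this
      simp [g_zero]
    · have ha1 : 1 ≤ a := le_trans hb1 hba
      have hga := g_eq a ha1
      have hgb := g_eq b hb1
      have hgn := g_eq n (by omega)
      rcases Nat.even_or_odd a with ⟨x, hx⟩ | ⟨x, hx⟩ <;>
        rcases Nat.even_or_odd b with ⟨y, hy⟩ | ⟨y, hy⟩ <;>
        subst hx <;> subst hy
      · -- a = x + x, b = y + y
        have d1 : (x + x + 1) / 2 = x := by omega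
        have d2 : (x + x) / 2 = x := by omega
        have d3 : (y + y + 1) / 2 = y := by omega
        have d4 : (y + y) / 2 = y := by omega
        have d5 : (n + 1) / 2 = x + y := by omega
        have d6 : n / 2 = x + y := by omega
        rw [d1, d2] at hga; rw [d3, d4] at hgb; rw [d5, d6] at hgn
        have I1 := IH (x + y) (by omega) x y rfl (by omega)
        omega
      · -- a = x + x, b = 2y+1
        have d1 : (x + x + 1) / 2 = x := by omega
        have d2 : (x + x) / 2 = x := by omega
        have d3 : (2 * y + 1 + 1) / 2 = y + 1 := by omega
        have d4 : (2 * y + 1) / 2 = y := by omega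
        have d5 : (n + 1) / 2 = x + y + 1 := by omega
        have d6 : n / 2 = x + y := by omega
        rw [d1, d2] at hga; rw [d3, d4] at hgb; rw [d5, d6] at hgn
        have I1 := IH (x + y + 1) (by omega) x (y + 1) (by omega) (by omega)
        have I2 := IH (x + y) (by omega) x y rfl (by omega)
        omega
      · -- a = 2x+1, b = y + y
        have d1 : (2 * x + 1 + 1) / 2 = x + 1 := by omega
        have d2 : (2 * x + 1) / 2 = x := by omega
        have d3 : (y + y + 1) / 2 = y := by omega
        have d4 : (y + y) / 2 = y := by omega
        have d5 : (n + 1) / 2 = x + y + 1 := by omega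
        have d6 : n / 2 = x + y := by omega
        rw [d1, d2] at hga; rw [d3, d4] at hgb; rw [d5, d6] at hgn
        have I1 := IH (x + y + 1) (by omega) (x + 1) y (by omega) (by omega)
        have I2 := IH (x + y) (by omega) x y rfl (by omega)
        omega
      · -- a = 2x+1, b = 2y+1
        have d1 : (2 * x + 1 + 1) / 2 = x + 1 := by omega
        have d2 : (2 * x + 1) / 2 = x := by omega
        have d3 : (2 * y + 1 + 1) / 2 = y + 1 := by omega
        have d4 : (2 * y + 1) / 2 = y := by omega
        have d5 : (n + 1) / 2 = x + y + 1 := by omega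
        have d6 : n / 2 = x + y + 1 := by omega
        rw [d1, d2] at hga; rw [d3, d4] at hgb; rw [d5, d6] at hgn
        have I1 := IH (x + y + 1) (by omega) (x + 1) y (by omega) (by omega)
        have I2 : g x + g (y + 1) + y ≤ g (x + y + 1) := by
          rcases le_or_gt (y + 1) x with h' | h'
          · have := IH (x + y + 1) (by omega) x (y + 1) (by omega) h'
            omega
          · have := IH (x + y + 1) (by omega) (y + 1) x (by omega) (by omega)
            omega
        omega

lemma g_superadd (a b : ℕ) : g a + g b + min a b ≤ g (a + b) := by
  rcases le_total b a with hba | hab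
  · rw [min_eq_right hba]
    exact g_superadd_aux (a + b) a b rfl hba
  · rw [min_eq_left hab, add_comm a b]
    have := g_superadd_aux (b + a) b a rfl hab
    omega

lemma g_pow_add : ∀ j t : ℕ, t ≤ 2 ^ j → g (2 ^ j + t) = g (2 ^ j) + g t + t := by
  intro j
  induction j with
  | zero =>
    intro t ht
    interval_cases t
    · simp [g_zero]
    · have h2 := g_eq (2 ^ 0 + 1) (by norm_num)
      norm_num at h2 ⊢
      omega
  | succ j IHj =>
    intro t ht
    rcases Nat.eq_zero_or_pos t with h0 | h1
    · subst h0
      simp [g_zero]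
    · have hp : (2 : ℕ) ^ (j + 1) = 2 * 2 ^ j := by ring
      have hn1 : (2 ^ (j + 1) + t + 1) / 2 = 2 ^ j + (t + 1) / 2 := by omega
      have hn2 : (2 ^ (j + 1) + t) / 2 = 2 ^ j + t / 2 := by omega
      have hgn := g_eq (2 ^ (j + 1) + t) (by omega)
      rw [hn1, hn2] at hgn
      have I1 := IHj ((t + 1) / 2) (by omega)
      have I2 := IHj (t / 2) (by omega)
      have hgt := g_eq t h1
      have hg2 := g_eq (2 ^ (j + 1)) (Nat.one_le_two_pow)
      have hm1 : (2 ^ (j + 1) + 1) / 2 = 2 ^ j := by omega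
      have hm2 : (2 ^ (j + 1)) / 2 = 2 ^ j := by omega
      rw [hm1, hm2] at hg2
      omega

lemma one_le_numLeaves (T : BTree) : 1 ≤ numLeaves T := by
  induction T with
  | leaf => exact le_refl 1
  | node l r ihl ihr => simp only [numLeaves]; omega

lemma nb_le_g (T : BTree) : Nb T ≤ g (numLeaves T) := by
  induction T with
  | leaf => simp [Nb, numLeaves, g_one]
  | node l r ihl ihr =>
    simp only [Nb, numLeaves]
    calc Nb l + Nb r + min (numLeaves l) (numLeaves r)
        ≤ g (numLeaves l) + g (numLeaves r) + min (numLeaves l) (numLeaves r) := by omega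
      _ ≤ g (numLeaves l + numLeaves r) := g_superadd _ _

lemma colless_add_two_nb (T : BTree) : colless T + 2 * Nb T = sackin T := by
  induction T with
  | leaf => rfl
  | node l r ihl ihr =>
    simp only [colless, Nb, sackin]
    rcases le_total (numLeaves l) (numLeaves r) with hle | hle
    · rw [max_eq_right hle, min_eq_left hle]; omega
    · rw [max_eq_left hle, min_eq_right hle]; omega

/-- The maximally balanced tree with `n` leaves. -/
def mb (n : ℕ) : BTree :=
  if _ : n ≤ 1 then BTree.leaf else BTree.node (mb ((n + 1) / 2)) (mb (n / 2))
decreasing_by all_goals omega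

lemma numLeaves_mb : ∀ n, 1 ≤ n → numLeaves (mb n) = n := by
  intro n
  induction n using Nat.strong_induction_on with
  | _ n IH =>
    intro h
    rw [mb]
    split
    · next h1 => simp only [numLeaves]; omega
    · next h1 =>
      have hA := IH ((n + 1) / 2) (by omega) (by omega)
      have hB := IH (n / 2) (by omega) (by omega)
      simp only [numLeaves, hA, hB]
      omega

lemma nb_mb : ∀ n : ℕ, Nb (mb n) = g n := by
  intro n
  induction n using Nat.strong_induction_on with
  | _ n IH =>
    rw [mb]
    split
    · next h1 =>
      have : g n = 0 := by interval_cases n <;> simp [g_zero, g_one]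
      simp [Nb, this]
    · next h1 =>
      have hA := numLeaves_mb ((n + 1) / 2) (by omega)
      have hB := numLeaves_mb (n / 2) (by omega)
      have IA := IH ((n + 1) / 2) (by omega)
      have IB := IH (n / 2) (by omega)
      have hgn := g_eq n (by omega)
      simp only [Nb, hA, hB, IA, IB]
      rw [min_eq_right (by omega : n / 2 ≤ (n + 1) / 2)]
      omega

lemma key_ineq (a b : ℕ) (h1a : 1 ≤ a) (h1b : 1 ≤ b) (hba : b ≤ a)
    (hbig : 2 ^ (Nat.clog 2 (a + b) - 1) < a) :
    g a + g b + b < g (a + b) := by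
  have hk1 : 0 < Nat.clog 2 (a + b) := Nat.clog_pos (by norm_num) (by omega)
  have hnk : a + b ≤ 2 ^ Nat.clog 2 (a + b) := Nat.le_pow_clog (by norm_num) _
  have hpow : 2 ^ Nat.clog 2 (a + b) = 2 * 2 ^ (Nat.clog 2 (a + b) - 1) := by
    conv_lhs => rw [show Nat.clog 2 (a + b) = (Nat.clog 2 (a + b) - 1) + 1 from by omega]
    rw [pow_succ]; ring
  have hab2c : a + b ≤ 2 * 2 ^ (Nat.clog 2 (a + b) - 1) := by omega
  have ht1 : 1 ≤ a - 2 ^ (Nat.clog 2 (a + b) - 1) := by omega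
  have htc : a - 2 ^ (Nat.clog 2 (a + b) - 1) ≤ 2 ^ (Nat.clog 2 (a + b) - 1) := by omega
  have hga := g_pow_add (Nat.clog 2 (a + b) - 1) (a - 2 ^ (Nat.clog 2 (a + b) - 1)) htc
  rw [show 2 ^ (Nat.clog 2 (a + b) - 1) + (a - 2 ^ (Nat.clog 2 (a + b) - 1)) = a
      from by omega] at hga
  have hsup1 := g_superadd b (a - 2 ^ (Nat.clog 2 (a + b) - 1))
  have hmin1 : 1 ≤ min b (a - 2 ^ (Nat.clog 2 (a + b) - 1)) := le_min h1b ht1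
  have hsup2 := g_superadd (2 ^ (Nat.clog 2 (a + b) - 1))
      (b + (a - 2 ^ (Nat.clog 2 (a + b) - 1)))
  have hmin2 : min (2 ^ (Nat.clog 2 (a + b) - 1))
      (b + (a - 2 ^ (Nat.clog 2 (a + b) - 1)))
      = b + (a - 2 ^ (Nat.clog 2 (a + b) - 1)) := min_eq_right (by omega)
  rw [show 2 ^ (Nat.clog 2 (a + b) - 1) + (b + (a - 2 ^ (Nat.clog 2 (a + b) - 1))) = a + b
      from by omega] at hsup2
  omega

end BTree

open BTree in
/-- if `T = (T_a, T_b)` with `n_a ≥ n_b` and `n_a > 2^{k-1}` for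
`k = ⌈log₂ n⌉`, then `T` does not minimize `Δ_CS` among trees with `n` leaves. -/
theorem not_min_of_large_na (Ta Tb : BTree) (h : numLeaves Tb ≤ numLeaves Ta)
    (hbig : 2 ^ (Nat.clog 2 (numLeaves (BTree.node Ta Tb)) - 1) < numLeaves Ta) :
    ∃ T' : BTree, numLeaves T' = numLeaves (BTree.node Ta Tb) ∧
      deltaCS T' < deltaCS (BTree.node Ta Tb) := by
  have h1a : 1 ≤ numLeaves Ta := one_le_numLeaves Ta
  have h1b : 1 ≤ numLeaves Tb := one_le_numLeaves Tb
  have hnl : numLeaves (BTree.node Ta Tb) = numLeaves Ta + numLeaves Tb := rfl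
  rw [hnl] at hbig
  refine ⟨mb (numLeaves Ta + numLeaves Tb), ?_, ?_⟩
  · rw [numLeaves_mb _ (by omega), hnl]
  · have key : Nb (BTree.node Ta Tb) < Nb (mb (numLeaves Ta + numLeaves Tb)) := by
      rw [nb_mb]
      have hNb : Nb (BTree.node Ta Tb)
          = Nb Ta + Nb Tb + numLeaves Tb := by
        simp only [Nb]
        rw [min_eq_right h]
      have hA := nb_le_g Ta
      have hB := nb_le_g Tb
      have hk := key_ineq (numLeaves Ta) (numLeaves Tb) h1a h1b h hbig
      omega
    have e1 := colless_add_two_nb (mb (numLeaves Ta + numLeaves Tb))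
    have e2 := colless_add_two_nb (BTree.node Ta Tb)
    simp only [deltaCS]
    omega
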